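/- In the 3-state MDP example, the Markovian greedy CVaR policy is strictly suboptimal for the trajectory CVaR objective: with β = CVaR_{0.1}, the policy taking a₁ at s₁ (per-state greedy tie-break possibility) combined with a₀ at s₀ yields trajectory return distribution {95 w.p. 0.9, −15 w.p. 0.1} with β-value −15, and the policy (a₁ at s₀) yields constant −10; whereas the history-independent-looking policy taking a₀ at both states yields {200 w.p. 0.81, 90 w.p. 0.18, −20 w.p. 0.01} with β-value 7.9 > −10 > −15. Hence the CVaR of the trajectory return of the policy maximizing per-state CVaR is strictly less than the optimal trajectory CVaR. -/

import Mathlib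

open MeasureTheory

/-- Quantile function of a distribution `μ` on ℝ. -/
noncomputable def qf (μ : Measure ℝ) (τ : ℝ) : ℝ :=
  sInf {x : ℝ | τ ≤ (μ (Set.Iic x)).toReal}

/-- Lower-tail conditional value-at-risk `CVaR_η[X] = (1/η) ∫₀^η F_X^{-1}`. -/
noncomputable def cvar (η : ℝ) (μ : Measure ℝ) : ℝ :=
  (1 / η) * ∫ τ in Set.Ioo (0:ℝ) η, qf μ τ

lemma F_two (a b : ENNReal) (ha : a ≠ ⊤) (hb : b ≠ ⊤) (c d x : ℝ) :
    (((a • Measure.dirac c + b • Measure.dirac d)) (Set.Iic x)).toReal =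
      (if c ≤ x then a.toReal else 0) + (if d ≤ x then b.toReal else 0) := by
  simp [Measure.add_apply, Measure.smul_apply, Measure.dirac_apply' _ measurableSet_Iic,
    Set.indicator_apply, Set.mem_Iic]
  split_ifs <;> simp [ENNReal.toReal_add, ha, hb]

lemma F_three (a b e : ENNReal) (ha : a ≠ ⊤) (hb : b ≠ ⊤) (he : e ≠ ⊤) (c d f x : ℝ) :
    (((a • Measure.dirac c + b • Measure.dirac d + e • Measure.dirac f)) (Set.Iic x)).toReal =
      (if c ≤ x then a.toReal else 0) + (if d ≤ x then b.toReal else 0)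
        + (if f ≤ x then e.toReal else 0) := by
  simp [Measure.add_apply, Measure.smul_apply, Measure.dirac_apply' _ measurableSet_Iic,
    Set.indicator_apply, Set.mem_Iic]
  split_ifs <;> simp [ENNReal.toReal_add, ha, hb, he]

lemma F_one (c x : ℝ) :
    ((Measure.dirac c : Measure ℝ) (Set.Iic x)).toReal = (if c ≤ x then 1 else 0) := by
  simp [Measure.dirac_apply' _ measurableSet_Iic, Set.indicator_apply, Set.mem_Iic]
  split_ifs <;> simp

lemma qf_eq_of (μ : Measure ℝ) (τ a : ℝ)
    (h : {x : ℝ | τ ≤ (μ (Set.Iic x)).toReal} = Set.Ici a) : qf μ τ = a := by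
  rw [qf, h, csInf_Ici]

lemma fin1 : (9/10 : ENNReal) ≠ ⊤ := by simp [ENNReal.div_eq_top]
lemma fin2 : (1/10 : ENNReal) ≠ ⊤ := by simp [ENNReal.div_eq_top]
lemma fin3 : (81/100 : ENNReal) ≠ ⊤ := by simp [ENNReal.div_eq_top]
lemma fin4 : (18/100 : ENNReal) ≠ ⊤ := by simp [ENNReal.div_eq_top]
lemma fin5 : (1/100 : ENNReal) ≠ ⊤ := by simp [ENNReal.div_eq_top]

lemma qf_two (p q : ENNReal) (hp : p ≠ ⊤) (hq : q ≠ ⊤) (c d : ℝ) (τ : ℝ)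
    (h0 : 0 < τ) (h1 : τ ≤ q.toReal) (hcd : d < c) :
    qf (p • Measure.dirac c + q • Measure.dirac d) τ = d := by
  apply qf_eq_of
  ext x
  rw [Set.mem_setOf_eq, F_two _ _ hp hq, Set.mem_Ici]
  have hp0 : 0 ≤ p.toReal := ENNReal.toReal_nonneg
  split_ifs with h h' <;> constructor <;> intro hh <;> linarith

lemma qf_d01 (τ : ℝ) (h0 : 0 < τ) (h1 : τ ≤ 1/10) :
    qf ((9/10 : ENNReal) • Measure.dirac 95 + (1/10 : ENNReal) • Measure.dirac (-15)) τ
      = -15 := by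
  apply qf_two _ _ fin1 fin2 _ _ _ h0 ?_ (by norm_num)
  rw [ENNReal.toReal_div]; norm_num; linarith

lemma qf_Rs1a0 (τ : ℝ) (h0 : 0 < τ) (h1 : τ ≤ 1/10) :
    qf ((9/10 : ENNReal) • Measure.dirac 100 + (1/10 : ENNReal) • Measure.dirac (-10)) τ
      = -10 := by
  apply qf_two _ _ fin1 fin2 _ _ _ h0 ?_ (by norm_num)
  rw [ENNReal.toReal_div]; norm_num; linarith

lemma qf_dirac (c τ : ℝ) (h0 : 0 < τ) (h1 : τ ≤ 1) :
    qf (Measure.dirac c) τ = c := by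
  apply qf_eq_of
  ext x
  rw [Set.mem_setOf_eq, F_one, Set.mem_Ici]
  split_ifs with h <;> constructor <;> intro hh <;> linarith

lemma qf_d00_lo (τ : ℝ) (h0 : 0 < τ) (h1 : τ ≤ 1/100) :
    qf ((81/100 : ENNReal) • Measure.dirac 200 + (18/100 : ENNReal) • Measure.dirac 90
      + (1/100 : ENNReal) • Measure.dirac (-20)) τ = -20 := by
  apply qf_eq_of
  ext x
  rw [Set.mem_setOf_eq, F_three _ _ _ fin3 fin4 fin5, Set.mem_Ici]
  simp only [ENNReal.toReal_div]
  norm_num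
  split_ifs with h h' h'' <;> constructor <;> intro hh <;> linarith

lemma qf_d00_hi (τ : ℝ) (h0 : 1/100 < τ) (h1 : τ ≤ 19/100) :
    qf ((81/100 : ENNReal) • Measure.dirac 200 + (18/100 : ENNReal) • Measure.dirac 90
      + (1/100 : ENNReal) • Measure.dirac (-20)) τ = 90 := by
  apply qf_eq_of
  ext x
  rw [Set.mem_setOf_eq, F_three _ _ _ fin3 fin4 fin5, Set.mem_Ici]
  simp only [ENNReal.toReal_div]
  norm_num
  split_ifs with h h' h'' <;> constructor <;> intro hh <;> linarith

lemma cvar_const (μ : Measure ℝ) (c : ℝ)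
    (h : ∀ τ ∈ Set.Ioo (0:ℝ) (1/10), qf μ τ = c) : cvar (1/10) μ = c := by
  rw [cvar, setIntegral_congr_fun measurableSet_Ioo (fun τ hτ => h τ hτ),
    setIntegral_const, measureReal_def, Real.volume_Ioo, smul_eq_mul]
  rw [ENNReal.toReal_ofReal (by norm_num)]
  ring

lemma cvar_d00 :
    cvar (1/10) ((81/100 : ENNReal) • Measure.dirac 200
      + (18/100 : ENNReal) • Measure.dirac 90
      + (1/100 : ENNReal) • Measure.dirac (-20)) = 79 := by
  set μ : Measure ℝ := (81/100 : ENNReal) • Measure.dirac 200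
      + (18/100 : ENNReal) • Measure.dirac 90
      + (1/100 : ENNReal) • Measure.dirac (-20) with hμ
  set g : ℝ → ℝ := fun τ => if τ ≤ (1/100:ℝ) then (-20:ℝ) else 90 with hgdef
  have hg : Set.EqOn (qf μ) g (Set.Ioo (0:ℝ) (1/10)) := by
    intro τ hτ
    by_cases h : τ ≤ 1/100
    · rw [hgdef]; simp only [if_pos h]; exact qf_d00_lo τ hτ.1 h
    · rw [hgdef]; simp only [if_neg h]
      exact qf_d00_hi τ (not_le.mp h) (by linarith [hτ.2])
  have hint : ∫ τ in Set.Ioo (0:ℝ) (1/10), qf μ τ = 79/10 := by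
    rw [setIntegral_congr_fun measurableSet_Ioo hg]
    have hsplit : Set.Ioo (0:ℝ) (1/10) = Set.Ioc 0 (1/100) ∪ Set.Ioo (1/100) (1/10) :=
      (Set.Ioc_union_Ioo_eq_Ioo (by norm_num) (by norm_num)).symm
    have hdisj : Disjoint (Set.Ioc (0:ℝ) (1/100)) (Set.Ioo (1/100) (1/10)) := by
      rw [Set.disjoint_left]; rintro τ ⟨_, h2⟩ ⟨h3, _⟩; linarith
    have e1 : Set.EqOn g (fun _ => (-20:ℝ)) (Set.Ioc 0 (1/100)) := by
      intro τ hτ; rw [hgdef]; exact if_pos hτ.2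
    have e2 : Set.EqOn g (fun _ => (90:ℝ)) (Set.Ioo (1/100) (1/10)) := by
      intro τ hτ; rw [hgdef]; exact if_neg (not_le.mpr hτ.1)
    have i1 : IntegrableOn g (Set.Ioc (0:ℝ) (1/100)) :=
      (integrableOn_const (by simp) (by simp)).congr_fun e1.symm measurableSet_Ioc
    have i2 : IntegrableOn g (Set.Ioo (1/100:ℝ) (1/10)) :=
      (integrableOn_const (by simp) (by simp)).congr_fun e2.symm measurableSet_Ioo
    rw [hsplit, setIntegral_union hdisj measurableSet_Ioo i1 i2,
      setIntegral_congr_fun measurableSet_Ioc e1, setIntegral_congr_fun measurableSet_Ioo e2,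
      setIntegral_const, setIntegral_const, measureReal_def, measureReal_def, Real.volume_Ioc, Real.volume_Ioo]
    rw [ENNReal.toReal_ofReal (by norm_num), ENNReal.toReal_ofReal (by norm_num)]
    norm_num
  rw [cvar, hint]
  norm_num

/-- in the undiscounted two-step 3-state MDP, the Markovian greedy CVaR
policy is strictly suboptimal for the trajectory CVaR objective (β = CVaR₀.₁).
At `s₁`: `CVaR[R(s₁,a₀)] = −10 < −5 = CVaR[R(s₁,a₁)]`, so the per-state greedy policy
takes `a₁` at `s₁`.  Trajectory return distributions: `(a₀,a₁)` gives
`{95 w.p. 0.9; −15 w.p. 0.1}` with β-value `−15`; `(a₁,a₁)` gives the constant `−10`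
with β-value `−10`; `(a₀,a₀)` gives `{200 w.p. 0.81; 90 w.p. 0.18; −20 w.p. 0.01}`
whose β-value (the mean of the worst 10% tail, `(0.01·(−20)+0.09·90)/0.1`) exceeds
`−10 > −15`.  Hence the trajectory CVaR of any per-state-greedy policy (at most `−10`)
is strictly less than the optimal trajectory CVaR, achieved by `(a₀,a₀)`. -/
theorem greedy_cvar_policy_strictly_suboptimal :
    let d00 : Measure ℝ := (81/100 : ENNReal) • Measure.dirac 200 +
      (18/100 : ENNReal) • Measure.dirac 90 + (1/100 : ENNReal) • Measure.dirac (-20)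
    let d01 : Measure ℝ :=
      (9/10 : ENNReal) • Measure.dirac 95 + (1/10 : ENNReal) • Measure.dirac (-15)
    let d11 : Measure ℝ := Measure.dirac (-10)
    let Rs₁a₀ : Measure ℝ :=
      (9/10 : ENNReal) • Measure.dirac 100 + (1/10 : ENNReal) • Measure.dirac (-10)
    let Rs₁a₁ : Measure ℝ := Measure.dirac (-5)
    -- the per-state greedy choice at s₁ is a₁:
    cvar (1/10) Rs₁a₀ < cvar (1/10) Rs₁a₁ ∧
    -- trajectory β-values of the two policies compatible with that greedy choice:
    cvar (1/10) d01 = -15 ∧ cvar (1/10) d11 = -10 ∧ (-15:ℝ) < -10 ∧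
    -- the policy (a₀,a₀) strictly beats both:
    (-10:ℝ) < cvar (1/10) d00 ∧
    max (cvar (1/10) d01) (cvar (1/10) d11) < cvar (1/10) d00 := by
  intro d00 d01 d11 Rs₁a₀ Rs₁a₁
  have h00 : cvar (1/10) d00 = 79 := cvar_d00
  have h01 : cvar (1/10) d01 = -15 :=
    cvar_const _ _ (fun τ hτ => qf_d01 τ hτ.1 (le_of_lt hτ.2))
  have h11 : cvar (1/10) d11 = -10 :=
    cvar_const _ _ (fun τ hτ => qf_dirac _ τ hτ.1 (by linarith [hτ.2]))
  have ha0 : cvar (1/10) Rs₁a₀ = -10 :=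
    cvar_const _ _ (fun τ hτ => qf_Rs1a0 τ hτ.1 (le_of_lt hτ.2))
  have ha1 : cvar (1/10) Rs₁a₁ = -5 :=
    cvar_const _ _ (fun τ hτ => qf_dirac _ τ hτ.1 (by linarith [hτ.2]))
  rw [h00, h01, h11, ha0, ha1]
  norm_num
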